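/- arXiv:math/0401375 — 3 statements merged into one kernel-verified Lean document; each statement's English description precedes it below -/
import Mathlib

section
/- Let α, β, i be positive integers and let α = C(m_i, i) + C(m_{i-1}, i-1) + ⋯ + C(m_j, j) be the i-binomial development of α. If β < C(m_j, j-1), then (α + β)^{<i>} = α^{<i>} + β^{<j-1>}. -/
open scoped BigOperators

/-- The largest `m` with `C(m, i) ≤ α` (for `i ≥ 1`, `α ≥ 1` this is the leading
exponent of the `i`-binomial development of `α`). -/
noncomputable def lead (α i : ℕ) : ℕ := sSup {m : ℕ | Nat.choose m i ≤ α}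

/-- `binUp i α = α^{<i>}`, defined through the `i`-binomial development of `α`:
if `α = C(m_i, i) + C(m_{i-1}, i-1) + ⋯ + C(m_j, j)` with
`m_i > m_{i-1} > ⋯ > m_j ≥ j ≥ 1`, then
`binUp i α = C(m_i+1, i+1) + C(m_{i-1}+1, i) + ⋯ + C(m_j+1, j+1)`, and `binUp i 0 = 0`. -/
noncomputable def binUp : ℕ → ℕ → ℕ
  | 0, _ => 0
  | (i+1), α =>
    if α = 0 then 0
    else Nat.choose (lead α (i+1) + 1) (i+2) +
      binUp i (α - Nat.choose (lead α (i+1)) (i+1))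

/-- `h : ℕ → ℕ` is a Macaulay function if `h 0 = 1` and `h (i+1) ≤ (h i)^{<i>}`
for every `i ≥ 1`. -/
def MacaulayFun (h : ℕ → ℕ) : Prop :=
  h 0 = 1 ∧ ∀ i, 1 ≤ i → h (i+1) ≤ binUp i (h i)

/-- `s₀(h) = inf {n | h n < C(a+n-1, n)} ∈ ℕ ∪ {∞}` for a Macaulay function of
type `a = h 1`. -/
noncomputable def s0M (h : ℕ → ℕ) : ℕ∞ :=
  sInf {x : ℕ∞ | ∃ n : ℕ, x = (n : ℕ∞) ∧ h n < Nat.choose (h 1 + n - 1) n}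

/-- `sup f = max {n | f n ≠ 0}` for a finitely supported `f : ℕ → ℕ`. -/
noncomputable def supN (f : ℕ → ℕ) : ℕ := sSup {n : ℕ | f n ≠ 0}

/-- A character: a finitely supported `γ : ℤ → ℤ` with `∑ γ(n) = 0`. -/
def IsChar (γ : ℤ → ℤ) : Prop :=
  (Function.support γ).Finite ∧ ∑ᶠ n, γ n = 0

/-- `s₀(γ) = inf {n ≥ 0 | γ n ≠ -1}`. -/
noncomputable def s0C (γ : ℤ → ℤ) : ℤ := sInf {n : ℤ | 0 ≤ n ∧ γ n ≠ -1}

/-- A positive character: `γ(n) = 0` for `n < 0`, `γ(0) = -1` and `γ(n) ≥ 0`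
for every `n ≥ s₀(γ)`. -/
def PosChar (γ : ℤ → ℤ) : Prop :=
  IsChar γ ∧ (∀ n < 0, γ n = 0) ∧ γ 0 = -1 ∧ ∀ n : ℤ, s0C γ ≤ n → 0 ≤ γ n

/-- `sup γ = max {n | γ n ≠ 0}` for a finitely supported `γ : ℤ → ℤ`. -/
noncomputable def supZ (γ : ℤ → ℤ) : ℤ := sSup {n : ℤ | γ n ≠ 0}

/-- `IsDev α i j m` says that `α = C(m_i, i) + C(m_{i-1}, i-1) + ⋯ + C(m_j, j)`
with `m_i > m_{i-1} > ⋯ > m_j ≥ j ≥ 1` is the `i`-binomial development of `α`. -/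
def IsDev (α i j : ℕ) (m : ℕ → ℕ) : Prop :=
  1 ≤ j ∧ j ≤ i ∧ j ≤ m j ∧ (∀ k, j ≤ k → k < i → m k < m (k+1)) ∧
    α = ∑ k ∈ Finset.Icc j i, Nat.choose (m k) k

lemma binUp_zero (i : ℕ) : binUp i 0 = 0 := by
  cases i <;> simp [binUp]

lemma lead_eq {α i n : ℕ} (h1 : Nat.choose n i ≤ α) (h2 : α < Nat.choose (n+1) i) :
    lead α i = n := by
  have hbdd : ∀ m ∈ {m : ℕ | Nat.choose m i ≤ α}, m ≤ n := by
    intro k hk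
    by_contra h
    push_neg at h
    exact absurd (le_trans (Nat.choose_le_choose i h) hk) (not_le.2 h2)
  exact le_antisymm (csSup_le ⟨n, h1⟩ hbdd) (le_csSup ⟨n, hbdd⟩ h1)

lemma dev_bound (j : ℕ) (m : ℕ → ℕ) (hj : 1 ≤ j) :
    ∀ i, j ≤ i → (∀ k, j ≤ k → k < i → m k < m (k+1)) →
    (∑ k ∈ Finset.Icc j i, Nat.choose (m k) k) + Nat.choose (m j) (j-1)
      ≤ Nat.choose (m i + 1) i := by
  intro i
  induction i with
  | zero => intro h _; omega
  | succ n ih =>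
      intro hji hmono
      rcases eq_or_lt_of_le hji with heq | h
      · rw [heq]
        rw [Finset.Icc_self, Finset.sum_singleton, Nat.choose_succ_succ (m (n+1)) n]
        have e : n + 1 - 1 = n := rfl
        rw [e]
        simp only [Nat.succ_eq_add_one]
        omega
      · have hjn : j ≤ n := by omega
        rw [Finset.sum_Icc_succ_top hji]
        have h1 := ih hjn (fun k hk hk' => hmono k hk (by omega))
        have h2 : m n + 1 ≤ m (n + 1) := hmono n hjn (Nat.lt_succ_self n)
        have h3 : Nat.choose (m n + 1) n ≤ Nat.choose (m (n+1)) n :=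
          Nat.choose_le_choose n h2
        have h4 : Nat.choose (m (n+1) + 1) (n+1)
            = Nat.choose (m (n+1)) n + Nat.choose (m (n+1)) (n+1) :=
          Nat.choose_succ_succ (m (n+1)) n
        omega

lemma binUp_add_aux (β j : ℕ) (hβ : 0 < β) (hj : 1 ≤ j) :
    ∀ i α (m : ℕ → ℕ), IsDev α i j m → β < Nat.choose (m j) (j-1) →
    binUp i (α + β) = binUp i α + binUp (j-1) β := by
  intro i
  induction i with
  | zero =>
      intro α m hdev _
      exact absurd hdev.2.1 (by omega)
  | succ n ih =>
      intro α m hdev hβlt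
      obtain ⟨hj1, hji, hjm, hmono, hsum⟩ := hdev
      have hCle : Nat.choose (m (n+1)) (n+1) ≤ α := by
        rw [hsum]
        have hmem : n + 1 ∈ Finset.Icc j (n+1) := Finset.mem_Icc.2 ⟨hji, le_refl _⟩
        have h : Nat.choose (m (n+1)) (n+1) ≤ ∑ k ∈ Finset.Icc j (n+1), Nat.choose (m k) k :=
          Finset.single_le_sum (f := fun k => Nat.choose (m k) k) (fun k _ => Nat.zero_le _) hmem
        exact h
      have hα0 : 0 < α := by
        have : 0 < Nat.choose (m j) j := Nat.choose_pos hjm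
        have hmem : j ∈ Finset.Icc j (n+1) := Finset.mem_Icc.2 ⟨le_refl _, hji⟩
        have h : Nat.choose (m j) j ≤ ∑ k ∈ Finset.Icc j (n+1), Nat.choose (m k) k :=
          Finset.single_le_sum (f := fun k => Nat.choose (m k) k) (fun k _ => Nat.zero_le _) hmem
        omega
      have hbound := dev_bound j m hj1 (n+1) hji hmono
      have hαβ : α + β < Nat.choose (m (n+1) + 1) (n+1) := by omega
      have hlead1 : lead (α + β) (n+1) = m (n+1) :=
        lead_eq (le_trans hCle (Nat.le_add_right _ _)) hαβ
      have hlead2 : lead α (n+1) = m (n+1) := lead_eq hCle (by omega)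
      rw [binUp, binUp, if_neg (by omega), if_neg (by omega), hlead1, hlead2]
      rcases eq_or_lt_of_le hji with heq | hlt
      · -- j = n + 1
        have hαeq : α = Nat.choose (m j) j := by
          rw [hsum, ← heq, Finset.Icc_self, Finset.sum_singleton]
        rw [← heq]
        have e1 : α + β - Nat.choose (m j) j = β := by omega
        have e2 : α - Nat.choose (m j) j = 0 := by omega
        rw [e1, e2, binUp_zero]
        have e3 : j - 1 = n := by omega
        rw [e3]
        omega
      · -- j ≤ n
        have hjn : j ≤ n := by omega
        have hsum' : α - Nat.choose (m (n+1)) (n+1)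
            = ∑ k ∈ Finset.Icc j n, Nat.choose (m k) k := by
          rw [hsum, Finset.sum_Icc_succ_top hji]; omega
        have hdev' : IsDev (α - Nat.choose (m (n+1)) (n+1)) n j m :=
          ⟨hj1, hjn, hjm, fun k hk hk' => hmono k hk (by omega), hsum'⟩
        have hIH := ih (α - Nat.choose (m (n+1)) (n+1)) m hdev' hβlt
        have e1 : α + β - Nat.choose (m (n+1)) (n+1)
            = (α - Nat.choose (m (n+1)) (n+1)) + β := by omega
        rw [e1, hIH]
        omega

/-- Lemma 2.15: if `α = C(m_i, i) + ⋯ + C(m_j, j)` is the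
`i`-binomial development of `α` and `β < C(m_j, j-1)`, then
`(α + β)^{<i>} = α^{<i>} + β^{<j-1>}`. -/
theorem binUp_add (α β i j : ℕ) (m : ℕ → ℕ)
    (hα : 0 < α) (hβ : 0 < β) (hi : 0 < i)
    (hdev : IsDev α i j m) (hβlt : β < Nat.choose (m j) (j - 1)) :
    binUp i (α + β) = binUp i α + binUp (j - 1) β :=
  binUp_add_aux β j hβ hdev.1 i α m hdev hβlt
end

section
/- Let h : ℕ → ℕ be a finitely supported function, extended by 0 to negative integers, and let γ = -∂h, i.e. γ(n) = h(n-1) - h(n). Then h is a Macaulay function of type 2 if and only if γ is a positive character with s_0(γ) ≥ 2; in that case s_0(γ) = s_0(h). -/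
open scoped BigOperators

lemma lead_eq_of_le (i α : ℕ) (h1 : 1 ≤ α) (h2 : α ≤ i + 1) : lead α (i+1) = i + 1 := by
  have : IsGreatest {m : ℕ | Nat.choose m (i+1) ≤ α} (i+1) := by
    constructor
    · simpa [Nat.choose_self] using h1
    · intro m hm
      by_contra hlt
      push_neg at hlt
      have : i + 2 ≤ Nat.choose m (i+1) :=
        le_trans (by simp [Nat.choose_succ_self_right]) (Nat.choose_le_choose (i+1) hlt)
      simp only [Set.mem_setOf_eq] at hm
      omega
  exact this.csSup_eq

lemma binUp_of_le (i α : ℕ) (h2 : α ≤ i) : binUp i α = α := by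
  induction i generalizing α with
  | zero => interval_cases α; simp [binUp]
  | succ i ih =>
    rcases Nat.eq_zero_or_pos α with rfl | h1
    · simp [binUp]
    have hl : lead α (i+1) = i + 1 := lead_eq_of_le i α h1 (by omega)
    rw [binUp, if_neg (by omega), hl, Nat.choose_self, Nat.choose_self]
    rcases Nat.eq_or_lt_of_le h1 with h | h
    · rw [← h]; simp [binUp_zero]
    · rw [ih (α - 1) (by omega)]; omega

lemma binUp_succ_self (i : ℕ) (hi : 1 ≤ i) : binUp i (i+1) = i + 2 := by
  obtain ⟨k, rfl⟩ : ∃ k, i = k + 1 := ⟨i-1, by omega⟩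
  have hl : lead (k+2) (k+1) = k + 2 := by
    have : IsGreatest {m : ℕ | Nat.choose m (k+1) ≤ k+2} (k+2) := by
      constructor
      · simp [Nat.choose_succ_self_right]
      · intro m hm
        by_contra hlt
        push_neg at hlt
        have h3 : Nat.choose (k+3) (k+1) ≤ Nat.choose m (k+1) := Nat.choose_le_choose _ hlt
        have h4 : Nat.choose (k+3) (k+1) = Nat.choose (k+2) k + Nat.choose (k+2) (k+1) :=
          Nat.choose_succ_succ' (k+2) k
        have h5 : 1 ≤ Nat.choose (k+2) k := Nat.choose_pos (by omega)
        have h6 : Nat.choose (k+2) (k+1) = k+2 := Nat.choose_succ_self_right _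
        simp only [Set.mem_setOf_eq] at hm
        omega
    exact this.csSup_eq
  show binUp (k+1) (k+2) = k+3
  rw [binUp, if_neg (by omega)]
  rw [show k+1+1 = k+2 from rfl, hl, Nat.choose_succ_self_right, Nat.choose_succ_self_right,
    Nat.sub_self, binUp_zero]


lemma forward_aux (h : ℕ → ℕ)
    (hfin : (Function.support h).Finite)
    (hz : ℤ → ℤ) (hhz : ∀ n : ℤ, hz n = if n < 0 then 0 else (h n.toNat : ℤ))
    (γ : ℤ → ℤ) (hγ : ∀ n : ℤ, γ n = hz (n - 1) - hz n)
    (mac : MacaulayFun h) (h1 : h 1 = 2) :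
    (PosChar γ ∧ 2 ≤ s0C γ) ∧ s0M h = ((s0C γ).toNat : ℕ∞) := by
  obtain ⟨h0, hM⟩ := mac
  have hzn : ∀ m : ℕ, hz (m : ℤ) = (h m : ℤ) := by
    intro m
    rw [hhz, if_neg (not_lt.mpr (Int.natCast_nonneg m))]
    simp
  have γ0 : γ 0 = -1 := by
    have e := hγ 0
    rw [show (0:ℤ) - 1 = -1 by ring, hhz (-1), if_pos (by norm_num)] at e
    rw [e, show (0:ℤ) = ((0:ℕ):ℤ) from rfl, hzn 0, h0]
    ring
  have γneg : ∀ n < 0, γ n = 0 := by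
    intro n hn
    rw [hγ, hhz, hhz, if_pos hn, if_pos (by omega)]
    ring
  have γsucc : ∀ m : ℕ, γ ((m:ℤ) + 1) = (h m : ℤ) - h (m+1) := by
    intro m
    rw [hγ, show ((m:ℤ)+1-1) = (m:ℤ) by ring, hzn m,
      show ((m:ℤ)+1) = ((m+1:ℕ):ℤ) by push_cast; ring, hzn (m+1)]
  have lem1 : ∀ n, 1 ≤ n → h n ≤ n + 1 := by
    intro n hn
    induction n, hn using Nat.le_induction with
    | base => omega
    | succ n hn ih =>
      have hb := hM n hn
      rcases Nat.lt_or_ge (h n) (n+1) with hc | hc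
      · rw [binUp_of_le n (h n) (by omega)] at hb; omega
      · have he : h n = n + 1 := le_antisymm ih hc
        rw [he, binUp_succ_self n hn] at hb; omega
  have lem2 : ∀ n, 1 ≤ n → h n ≤ n → h (n+1) ≤ h n := by
    intro n hn hc
    have hb := hM n hn
    rwa [binUp_of_le n (h n) hc] at hb
  have exN : ∃ n, h n ≤ n := by
    obtain ⟨b, hb⟩ := hfin.bddAbove
    have hz0 : h (b+1) = 0 := by
      by_contra hne
      exact absurd (hb (Function.mem_support.mpr hne)) (by omega)
    exact ⟨b+1, by omega⟩
  set t := Nat.find exN with htdef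
  have ht : h t ≤ t := Nat.find_spec exN
  have htmin : ∀ n, n < t → ¬ h n ≤ n := fun n hn => Nat.find_min exN hn
  have ht2 : 2 ≤ t := by
    by_contra hc
    push_neg at hc
    interval_cases t <;> omega
  have lemA : ∀ n, n < t → h n = n + 1 := by
    intro n hn
    rcases Nat.eq_zero_or_pos n with rfl | hn1
    · simpa using h0
    · have := htmin n hn
      have := lem1 n hn1
      omega
  have lemB : ∀ k, h (t+k) ≤ t ∧ h (t+k+1) ≤ h (t+k) := by
    intro k
    induction k with
    | zero => exact ⟨by simpa using ht, by simpa using lem2 t (by omega) ht⟩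
    | succ k ih =>
      have h1' : h (t+k+1) ≤ t := le_trans ih.2 ih.1
      have h2' := lem2 (t+k+1) (by omega) (le_trans h1' (by omega))
      exact ⟨h1', h2'⟩
  have hle : ∀ n, t ≤ n → h n ≤ t := by
    intro n hn
    obtain ⟨k, rfl⟩ := Nat.exists_eq_add_of_le hn
    exact (lemB k).1
  have hmono : ∀ n, t ≤ n → h (n+1) ≤ h n := by
    intro n hn
    obtain ⟨k, rfl⟩ := Nat.exists_eq_add_of_le hn
    exact (lemB k).2
  have γge : ∀ n : ℤ, (t:ℤ) ≤ n → 0 ≤ γ n := by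
    intro n hn
    lift n to ℕ using le_trans (Int.natCast_nonneg t) hn
    have hn' : t ≤ n := by exact_mod_cast hn
    rcases Nat.eq_or_lt_of_le hn' with rfl | hlt
    · rw [show ((t:ℕ):ℤ) = ((t-1:ℕ):ℤ) + 1 by omega,
        γsucc (t-1)]
      have e1 : h (t-1) = t := by have := lemA (t-1) (by omega); omega
      have e2 : t - 1 + 1 = t := by omega
      rw [e1, e2]
      omega
    · obtain ⟨m, rfl⟩ : ∃ m, n = m + 1 := ⟨n-1, by omega⟩
      rw [show ((m+1:ℕ):ℤ) = (m:ℤ) + 1 by push_cast; ring, γsucc m]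
      have := hmono m (by omega)
      omega
  have s0Ceq : s0C γ = (t : ℤ) := by
    have hL : IsLeast {n : ℤ | 0 ≤ n ∧ γ n ≠ -1} (t:ℤ) := by
      constructor
      · exact ⟨Int.natCast_nonneg t, by have := γge t le_rfl; omega⟩
      · intro n hn
        obtain ⟨hn0, hne⟩ := hn
        by_contra hc
        push_neg at hc
        lift n to ℕ using hn0
        have hnt : n < t := by exact_mod_cast hc
        rcases Nat.eq_zero_or_pos n with rfl | h1n
        · exact hne (by exact_mod_cast γ0)
        · obtain ⟨j, rfl⟩ : ∃ j, n = j+1 := ⟨n-1, by omega⟩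
          apply hne
          rw [show ((j+1:ℕ):ℤ) = (j:ℤ)+1 by push_cast; ring, γsucc j,
            lemA j (by omega), lemA (j+1) (by omega)]
          push_cast
          ring
    exact hL.csInf_eq
  have hsupz : Function.support hz ⊆ (fun m : ℕ => (m:ℤ)) '' Function.support h := by
    intro n hn
    rw [Function.mem_support, hhz] at hn
    by_cases hneg : n < 0
    · simp [hneg] at hn
    · refine ⟨n.toNat, ?_, show ((n.toNat:ℕ):ℤ) = n by omega⟩
      rw [Function.mem_support]
      intro h0'
      exact hn (by rw [if_neg hneg, h0']; simp)
  have hfinz : (Function.support hz).Finite := ((hfin.image _)).subset hsupz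
  have hfinz' : (Function.support (fun n => hz (n-1))).Finite := by
    have hsub : Function.support (fun n => hz (n-1)) ⊆ (fun n : ℤ => n + 1) '' Function.support hz := by
      intro n hn
      exact ⟨n - 1, hn, by ring⟩
    exact ((hfinz.image _)).subset hsub
  have hfinγ : (Function.support γ).Finite := by
    apply (hfinz'.union hfinz).subset
    intro n hn
    rw [Function.mem_support, hγ] at hn
    by_contra hc
    simp only [Set.mem_union, Function.mem_support, not_or, not_not] at hc
    have hc1 : hz (n-1) = 0 := hc.1
    have hc2 : hz n = 0 := hc.2
    omega
  have hsum : ∑ᶠ n, γ n = 0 := by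
    have e1 : ∑ᶠ n, γ n = ∑ᶠ n : ℤ, (hz (n-1) - hz n) := finsum_congr hγ
    rw [e1, finsum_sub_distrib hfinz' hfinz]
    have e2 : ∑ᶠ n : ℤ, hz (n - 1) = ∑ᶠ n, hz n := finsum_comp_equiv (Equiv.subRight (1:ℤ))
    rw [e2, sub_self]
  have hpos : PosChar γ := by
    refine ⟨⟨hfinγ, hsum⟩, γneg, γ0, ?_⟩
    intro n hn
    rw [s0Ceq] at hn
    exact γge n hn
  have hchoose : ∀ n : ℕ, Nat.choose (h 1 + n - 1) n = n + 1 := by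
    intro n
    rw [h1, show 2 + n - 1 = n + 1 by omega, Nat.choose_succ_self_right]
  have hs0M : s0M h = (t : ℕ∞) := by
    apply le_antisymm
    · exact sInf_le ⟨t, rfl, by rw [hchoose]; omega⟩
    · apply le_sInf
      rintro x ⟨n, rfl, hx⟩
      rw [hchoose] at hx
      have htn : t ≤ n := by
        by_contra hcc
        push_neg at hcc
        exact htmin n hcc (by omega)
      exact_mod_cast htn
  refine ⟨⟨hpos, by rw [s0Ceq]; exact_mod_cast ht2⟩, ?_⟩
  rw [s0Ceq, Int.toNat_natCast, hs0M]

lemma backward_aux (h : ℕ → ℕ)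
    (hz : ℤ → ℤ) (hhz : ∀ n : ℤ, hz n = if n < 0 then 0 else (h n.toNat : ℤ))
    (γ : ℤ → ℤ) (hγ : ∀ n : ℤ, γ n = hz (n - 1) - hz n)
    (pos : PosChar γ) (hs : 2 ≤ s0C γ) : MacaulayFun h ∧ h 1 = 2 := by
  obtain ⟨-, γneg, γ0, γge⟩ := pos
  have hzn : ∀ m : ℕ, hz (m : ℤ) = (h m : ℤ) := by
    intro m
    rw [hhz, if_neg (not_lt.mpr (Int.natCast_nonneg m))]
    simp
  have h0 : h 0 = 1 := by
    have e := hγ 0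
    rw [γ0, show (0:ℤ) - 1 = -1 by ring, hhz (-1), if_pos (by norm_num),
      show (0:ℤ) = ((0:ℕ):ℤ) from rfl, hzn 0] at e
    omega
  have hrec : ∀ m : ℕ, (h (m+1) : ℤ) = (h m : ℤ) - γ ((m+1:ℕ) : ℤ) := by
    intro m
    have e := hγ ((m+1:ℕ) : ℤ)
    rw [show (((m+1:ℕ):ℤ)-1) = (m:ℤ) by push_cast; ring, hzn m, hzn (m+1)] at e
    omega
  have neg1 : ∀ n : ℤ, 0 ≤ n → n < s0C γ → γ n = -1 := by
    intro n h0n hns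
    by_contra hc
    have hle : s0C γ ≤ n := csInf_le ⟨0, fun x hx => hx.1⟩ ⟨h0n, hc⟩
    omega
  set s := s0C γ with hsdef
  set t := s.toNat with htdef
  have hts : (t:ℤ) = s := Int.toNat_of_nonneg (by omega)
  have ht2 : 2 ≤ t := by omega
  have lemA : ∀ m : ℕ, (m:ℤ) < s → h m = m + 1 := by
    intro m
    induction m with
    | zero => intro _; simpa using h0
    | succ m ih =>
      intro hm
      have hm' : (m:ℤ) < s := by push_cast at hm; omega
      have e := hrec m
      rw [ih hm', neg1 ((m+1:ℕ):ℤ) (Int.natCast_nonneg _) (by push_cast at hm ⊢; omega)] at e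
      push_cast at e
      omega
  have h1 : h 1 = 2 := lemA 1 (by push_cast; omega)
  have hA : ∀ m : ℕ, m < t → h m = m + 1 := by
    intro m hm
    exact lemA m (by omega)
  have hmono : ∀ m : ℕ, t ≤ m → h (m+1) ≤ h m := by
    intro m hm
    have e := hrec m
    have hge : 0 ≤ γ ((m+1:ℕ):ℤ) := γge _ (by push_cast; omega)
    omega
  have hht : h t ≤ t := by
    have e := hrec (t-1)
    rw [show t - 1 + 1 = t by omega] at e
    have e1 : h (t-1) = (t-1) + 1 := hA (t-1) (by omega)
    have e2 : 0 ≤ γ ((t:ℕ):ℤ) := γge _ (by omega)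
    omega
  have hle : ∀ m, t ≤ m → h m ≤ t := by
    intro m hm
    induction m, hm using Nat.le_induction with
    | base => exact hht
    | succ m hm ih => exact le_trans (hmono m hm) ih
  refine ⟨⟨h0, ?_⟩, h1⟩
  intro i hi
  rcases Nat.lt_or_ge (i+1) t with hlt | hge
  · rw [hA i (by omega), binUp_succ_self i hi]
    have := hA (i+1) hlt
    omega
  · rcases Nat.eq_or_lt_of_le hge with heq | hgt
    · rw [hA i (by omega), binUp_succ_self i hi]
      have := hle (i+1) (by omega)
      omega
    · have hit : t ≤ i := by omega
      have h1' : h i ≤ i := le_trans (hle i hit) hit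
      rw [binUp_of_le i (h i) h1']
      exact hmono i hit

/-- Remark 2.18: for `h : ℕ → ℕ` finitely supported,
extended by zero to `ℤ`, and `γ = -∂h`, the function `h` is a Macaulay
function of type 2 iff `γ` is a positive character with `s₀(γ) ≥ 2`; in that
case `s₀(γ) = s₀(h)`. -/
theorem macaulay_type_two_iff_posChar (h : ℕ → ℕ)
    (hfin : (Function.support h).Finite)
    (hz : ℤ → ℤ) (hhz : ∀ n : ℤ, hz n = if n < 0 then 0 else (h n.toNat : ℤ))
    (γ : ℤ → ℤ) (hγ : ∀ n : ℤ, γ n = hz (n - 1) - hz n) :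
    ((MacaulayFun h ∧ h 1 = 2) ↔ (PosChar γ ∧ 2 ≤ s0C γ)) ∧
    ((MacaulayFun h ∧ h 1 = 2) → s0M h = ((s0C γ).toNat : ℕ∞)) := by
  constructor
  · constructor
    · rintro ⟨mac, h1⟩
      exact (forward_aux h hfin hz hhz γ hγ mac h1).1
    · rintro ⟨pos, hs⟩
      exact backward_aux h hz hhz γ hγ pos hs
  · rintro ⟨mac, h1⟩
    exact (forward_aux h hfin hz hhz γ hγ mac h1).2
end

section
/- Let h be a Macaulay function with h(0) = 1 and h(1) = a > 1 which is not binomial (i.e. s_0(h) < ∞). Then there exist an integer r ≥ 1 and Macaulay functions h_0, …, h_r such that: (i) h_i(1) = a-1 for 0 ≤ i < r and h_r(1) ≤ a-1; (ii) for each 1 ≤ i ≤ r, either s_0(h_{i-1}) = ∞ or h_i has finite support with sup h_i < s_0(h_{i-1}) - 1; (iii) h = h_0 + h_1[-1] + ⋯ + h_r[-r]. Moreover s_0(h) = r + 1. -/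
open scoped BigOperators

lemma aux_succ_le_choose (m i : ℕ) (hi : 1 ≤ i) : m + 1 ≤ Nat.choose (m + i) i := by
  induction m with
  | zero => simp [Nat.choose_self]
  | succ m ih =>
      obtain ⟨j, rfl⟩ : ∃ j, i = j + 1 := ⟨i - 1, by omega⟩
      have h2 : (m + 1 + (j+1)) = (m + (j+1)) + 1 := by omega
      rw [h2, Nat.choose_succ_succ']
      have : 1 ≤ Nat.choose (m + (j+1)) j := Nat.choose_pos (by omega)
      omega

lemma lead_set_nonempty (α i : ℕ) (hi : 1 ≤ i) : {m : ℕ | Nat.choose m i ≤ α}.Nonempty :=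
  ⟨0, by simp [Nat.choose_eq_zero_of_lt hi]⟩

lemma lead_set_bdd (α i : ℕ) (hi : 1 ≤ i) : BddAbove {m : ℕ | Nat.choose m i ≤ α} := by
  refine ⟨α + i, fun m hm => ?_⟩
  by_contra hc
  push_neg at hc
  have h1 : α + 1 + i ≤ m := by omega
  have h2 : α + 2 ≤ Nat.choose (α + 1 + i) i := aux_succ_le_choose (α+1) i hi
  have h3 : Nat.choose (α+1+i) i ≤ Nat.choose m i := Nat.choose_le_choose i h1
  simp only [Set.mem_setOf_eq] at hm
  omega

lemma choose_lead_le (α i : ℕ) (hi : 1 ≤ i) : Nat.choose (lead α i) i ≤ α :=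
  Nat.sSup_mem (lead_set_nonempty α i hi) (lead_set_bdd α i hi)

lemma le_lead {α i m : ℕ} (hi : 1 ≤ i) (h : Nat.choose m i ≤ α) : m ≤ lead α i :=
  le_csSup (lead_set_bdd α i hi) h

lemma lt_choose_lead_succ (α i : ℕ) (hi : 1 ≤ i) : α < Nat.choose (lead α i + 1) i := by
  by_contra hc
  push_neg at hc
  have := le_lead hi hc
  omega

lemma lead_mono {α β i : ℕ} (hi : 1 ≤ i) (hab : α ≤ β) : lead α i ≤ lead β i :=
  le_lead hi (le_trans (choose_lead_le α i hi) hab)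

lemma lead_ge {α i : ℕ} (hi : 1 ≤ i) (hα : 1 ≤ α) : i ≤ lead α i :=
  le_lead hi (by simpa [Nat.choose_self] using hα)

lemma lead_choose {i c : ℕ} (hi : 1 ≤ i) (hc : i ≤ c) : lead (Nat.choose c i) i = c := by
  refine le_antisymm ?_ (le_lead hi le_rfl)
  by_contra hlt
  push_neg at hlt
  have h1 := choose_lead_le (Nat.choose c i) i hi
  have h2 : Nat.choose (c+1) i ≤ Nat.choose (lead (Nat.choose c i) i) i :=
    Nat.choose_le_choose i (by omega)
  obtain ⟨j, rfl⟩ : ∃ j, i = j + 1 := ⟨i-1, by omega⟩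
  rw [Nat.choose_succ_succ'] at h2
  have h3 : 0 < Nat.choose c j := Nat.choose_pos (by omega)
  omega

lemma binUp_of_ne {α : ℕ} (i : ℕ) (hα : α ≠ 0) :
    binUp (i+1) α = Nat.choose (lead α (i+1) + 1) (i+2) +
      binUp i (α - Nat.choose (lead α (i+1)) (i+1)) := by
  rw [binUp]
  simp [hα]

lemma binUp_choose {n c : ℕ} (hn : 1 ≤ n) (hc : n ≤ c) :
    binUp n (Nat.choose c n) = Nat.choose (c+1) (n+1) := by
  obtain ⟨i, rfl⟩ : ∃ i, n = i + 1 := ⟨n-1, by omega⟩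
  have hpos : Nat.choose c (i+1) ≠ 0 := (Nat.choose_pos hc).ne'
  rw [binUp_of_ne i hpos, lead_choose hn hc, Nat.sub_self, binUp_zero]
  simp

lemma lead_lt {α i m : ℕ} (hi : 1 ≤ i) (h : α < Nat.choose m i) : lead α i < m := by
  by_contra hc
  push_neg at hc
  have := Nat.choose_le_choose i hc
  have := choose_lead_le α i hi
  omega

lemma binUp_add_one_le : ∀ i α m : ℕ, α < Nat.choose m (i+1) →
    binUp (i+1) α + 1 ≤ Nat.choose (m+1) (i+2) := by
  intro i
  induction i with
  | zero =>
      intro α m h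
      have hm : 1 ≤ m := by
        rcases Nat.eq_zero_or_pos m with rfl | hm
        · simp at h
        · exact hm
      rcases Nat.eq_zero_or_pos α with rfl | hα
      · rw [binUp_zero]
        have : 0 < Nat.choose (m+1) 2 := Nat.choose_pos (by omega)
        show 0 + 1 ≤ Nat.choose (m+1) 2
        omega
      · rw [binUp_of_ne 0 hα.ne']
        show Nat.choose (lead α 1 + 1) 2 + binUp 0 (α - Nat.choose (lead α 1) 1) + 1 ≤
          Nat.choose (m+1) 2
        set l := lead α 1 with hl
        have h1 : Nat.choose l 1 ≤ α := choose_lead_le α 1 le_rfl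
        have h2 : α < Nat.choose (l+1) 1 := lt_choose_lead_succ α 1 le_rfl
        have hlm : l < m := lead_lt le_rfl h
        have hb0 : binUp 0 (α - Nat.choose l 1) = 0 := binUp_zero 0
        have hp : Nat.choose (m+1) 2 = Nat.choose m 1 + Nat.choose m 2 :=
          Nat.choose_succ_succ' m 1
        have h4 : Nat.choose (l+1) 2 ≤ Nat.choose m 2 := Nat.choose_le_choose 2 (by omega)
        have h5 : Nat.choose m 1 = m := Nat.choose_one_right m
        omega
  | succ i ih =>
      intro α m h
      rcases Nat.eq_zero_or_pos α with rfl | hα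
      · rw [binUp_zero]
        have hm : i + 2 ≤ m := by
          by_contra hc
          push_neg at hc
          rw [Nat.choose_eq_zero_of_lt (by omega)] at h
          omega
        have : 0 < Nat.choose (m+1) (i+3) := Nat.choose_pos (by omega)
        show 0 + 1 ≤ Nat.choose (m+1) (i+3)
        omega
      · rw [binUp_of_ne (i+1) hα.ne']
        show Nat.choose (lead α (i+2) + 1) (i+3) +
          binUp (i+1) (α - Nat.choose (lead α (i+2)) (i+2)) + 1 ≤ Nat.choose (m+1) (i+3)
        set l := lead α (i+2) with hl
        have h1 : Nat.choose l (i+2) ≤ α := choose_lead_le α (i+2) (by omega)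
        have h2 : α < Nat.choose (l+1) (i+2) := lt_choose_lead_succ α (i+2) (by omega)
        have hlm : l < m := lead_lt (by omega) h
        have hli : i + 2 ≤ l := lead_ge (by omega) hα
        have hps : Nat.choose (l+1) (i+2) = Nat.choose l (i+1) + Nat.choose l (i+2) :=
          Nat.choose_succ_succ' l (i+1)
        have htail : α - Nat.choose l (i+2) < Nat.choose l (i+1) := by omega
        have hIH : binUp (i+1) (α - Nat.choose l (i+2)) + 1 ≤ Nat.choose (l+1) (i+2) :=
          ih (α - Nat.choose l (i+2)) l htail
        have hps2 : Nat.choose (l+2) (i+3) = Nat.choose (l+1) (i+2) + Nat.choose (l+1) (i+3) :=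
          Nat.choose_succ_succ' (l+1) (i+2)
        have hmono : Nat.choose (l+2) (i+3) ≤ Nat.choose (m+1) (i+3) :=
          Nat.choose_le_choose (i+3) (by omega)
        omega

lemma binUp_mono : ∀ i α β : ℕ, α ≤ β → binUp i α ≤ binUp i β := by
  intro i
  induction i with
  | zero => intro α β _; simp [binUp]
  | succ i ih =>
      intro α β hab
      rcases Nat.eq_zero_or_pos α with rfl | hα
      · rw [binUp_zero]; omega
      have hβ : 0 < β := lt_of_lt_of_le hα hab
      have hll : lead α (i+1) ≤ lead β (i+1) := lead_mono (by omega) hab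
      rcases eq_or_lt_of_le hll with heq | hlt
      · rw [binUp_of_ne i hα.ne', binUp_of_ne i hβ.ne', ← heq]
        have h0 : α - Nat.choose (lead α (i+1)) (i+1) ≤ β - Nat.choose (lead α (i+1)) (i+1) := by
          omega
        have := ih _ _ h0
        omega
      · have h2 : α < Nat.choose (lead α (i+1) + 1) (i+1) :=
          lt_choose_lead_succ α (i+1) (by omega)
        have h3 := binUp_add_one_le i α (lead α (i+1) + 1) h2
        have h4 : Nat.choose (lead α (i+1) + 1 + 1) (i+2) ≤ Nat.choose (lead β (i+1) + 1) (i+2) :=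
          Nat.choose_le_choose (i+2) (by omega)
        rw [binUp_of_ne i hβ.ne']
        omega

lemma binUp_prepend {n c y : ℕ} (hn : 1 ≤ n) (hc : n + 1 ≤ c) (hy : y ≤ Nat.choose c n) :
    binUp (n+1) (Nat.choose c (n+1) + y) ≤ Nat.choose (c+1) (n+2) + binUp n y := by
  rcases eq_or_lt_of_le hy with rfl | hylt
  · have hps : Nat.choose (c+1) (n+1) = Nat.choose c n + Nat.choose c (n+1) :=
      Nat.choose_succ_succ' c n
    have harg : Nat.choose c (n+1) + Nat.choose c n = Nat.choose (c+1) (n+1) := by omega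
    rw [harg, binUp_choose (by omega : 1 ≤ n+1) (by omega : n+1 ≤ c+1),
      binUp_choose hn (by omega : n ≤ c)]
    have hps2 : Nat.choose (c+2) (n+2) = Nat.choose (c+1) (n+1) + Nat.choose (c+1) (n+2) :=
      Nat.choose_succ_succ' (c+1) (n+1)
    have e : Nat.choose (c+1+1) (n+1+1) = Nat.choose (c+2) (n+2) := rfl
    rw [e]
    omega
  · have hα : Nat.choose c (n+1) + y ≠ 0 := by
      have : 0 < Nat.choose c (n+1) := Nat.choose_pos (by omega)
      omega
    obtain ⟨i, rfl⟩ : ∃ i, n = i + 1 := ⟨n-1, by omega⟩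
    have hlead : lead (Nat.choose c (i+2) + y) (i+2) = c := by
      refine le_antisymm ?_ (le_lead (by omega) (by omega))
      have hps : Nat.choose (c+1) (i+2) = Nat.choose c (i+1) + Nat.choose c (i+2) :=
        Nat.choose_succ_succ' c (i+1)
      have hub : Nat.choose c (i+2) + y < Nat.choose (c+1) (i+2) := by omega
      have := lead_lt (i := i+2) (by omega) hub
      omega
    rw [binUp_of_ne (i+1) hα, hlead]
    simp only [Nat.add_sub_cancel_left]
    exact le_rfl

def Gaux (h : ℕ → ℕ) (a : ℕ) : ℕ → ℕ → ℕ
  | 0 => h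
  | (i+1) => fun n => Gaux h a i (n+1) - Nat.choose (a - 2 + (n+1)) (n+1)

lemma choose_diag_mono (c m : ℕ) : ∀ i, Nat.choose (c + m) m ≤ Nat.choose (c + m + i) (m + i) := by
  intro i
  induction i with
  | zero => simp
  | succ i ih =>
      have e : c + m + (i+1) = (c + m + i) + 1 := by omega
      have e2 : m + (i+1) = (m + i) + 1 := by omega
      rw [e, e2, Nat.choose_succ_succ']
      omega

lemma growth_bound (g : ℕ → ℕ) (a : ℕ) (ha : 1 ≤ a) (hg1 : g 1 ≤ a)
    (hgr : ∀ n, 1 ≤ n → g (n+1) ≤ binUp n (g n)) :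
    ∀ n, 1 ≤ n → g n ≤ Nat.choose (a - 1 + n) n := by
  intro n
  induction n with
  | zero => omega
  | succ n ih =>
      intro _
      rcases Nat.eq_zero_or_pos n with rfl | hn
      · show g 1 ≤ Nat.choose (a - 1 + 1) 1
        have : Nat.choose (a - 1 + 1) 1 = a - 1 + 1 := Nat.choose_one_right _
        omega
      · have h1 := hgr n hn
        have h2 := ih hn
        have h3 : binUp n (g n) ≤ binUp n (Nat.choose (a-1+n) n) := binUp_mono _ _ _ h2
        have h4 : binUp n (Nat.choose (a-1+n) n) = Nat.choose (a-1+n+1) (n+1) :=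
          binUp_choose hn (by omega)
        have e : a - 1 + (n+1) = a - 1 + n + 1 := by omega
        rw [e]
        omega

lemma Gaux_closed (h : ℕ → ℕ) (a : ℕ) (ha : 2 ≤ a) :
    ∀ i n, Gaux h a i n =
      h (n + i) - (Nat.choose (a - 1 + (n + i)) (n + i) - Nat.choose (a - 1 + n) n) := by
  intro i
  induction i with
  | zero => intro n; simp [Gaux]
  | succ i ih =>
      intro n
      show Gaux h a i (n+1) - Nat.choose (a - 2 + (n+1)) (n+1) = _
      rw [ih (n+1)]
      have e1 : a - 2 + (n+1) = a - 1 + n := by omega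
      rw [e1]
      have e2 : n + (i+1) = (n+1) + i := by omega
      rw [e2]
      have e3 : a - 1 + ((n+1) + i) = a - 1 + (n+1) + i := by omega
      rw [e3]
      have hps : Nat.choose (a - 1 + n + 1) (n + 1)
          = Nat.choose (a-1+n) n + Nat.choose (a-1+n) (n+1) := Nat.choose_succ_succ' (a-1+n) n
      have e4 : a - 1 + (n+1) = a - 1 + n + 1 := by omega
      rw [e4]
      have hm1 : Nat.choose (a - 1 + n + 1) (n+1) ≤ Nat.choose (a - 1 + n + 1 + i) ((n+1) + i) := by
        have := choose_diag_mono (a - 1) (n+1) i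
        have e5 : a - 1 + (n+1) = a - 1 + n + 1 := by omega
        rw [e5] at this
        exact this
      have hz : 0 < Nat.choose (a-1+n) n := Nat.choose_pos (by omega)
      omega

lemma sInf_enat_coe (p : ℕ → Prop) (hne : ∃ n, p n) :
    sInf {x : ℕ∞ | ∃ n : ℕ, x = (n : ℕ∞) ∧ p n} = ((sInf {n | p n} : ℕ) : ℕ∞) := by
  apply le_antisymm
  · exact sInf_le ⟨sInf {n | p n}, rfl, Nat.sInf_mem hne⟩
  · refine le_sInf ?_
    rintro x ⟨n, rfl, hn⟩
    exact_mod_cast Nat.sInf_le hn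

/-- Theorem 2.20, existence: a non-binomial Macaulay
function `h` of type `a > 1` decomposes as `h = h₀ + h₁[-1] + ⋯ + h_r[-r]`
with Macaulay functions `hᵢ` satisfying the type and gap conditions, and
`s₀(h) = r + 1`. -/
theorem macaulay_decomposition_exists (h : ℕ → ℕ) (a : ℕ) (ha : 1 < a)
    (hM : MacaulayFun h) (h1 : h 1 = a) (hnb : s0M h ≠ ⊤) :
    ∃ r : ℕ, 1 ≤ r ∧ ∃ H : ℕ → ℕ → ℕ,
      (∀ i ≤ r, MacaulayFun (H i)) ∧
      (∀ i < r, H i 1 = a - 1) ∧ H r 1 ≤ a - 1 ∧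
      (∀ i, 1 ≤ i → i ≤ r →
        s0M (H (i - 1)) = ⊤ ∨
          ((Function.support (H i)).Finite ∧
            (supN (H i) : ℕ∞) + 1 < s0M (H (i - 1)))) ∧
      (∀ n, h n = ∑ i ∈ Finset.range (r + 1),
        if i ≤ n then H i (n - i) else 0) ∧
      s0M h = (r : ℕ∞) + 1 := by
  have ha2 : 2 ≤ a := ha
  set T : Set ℕ := {n | h n < Nat.choose (h 1 + n - 1) n} with hTdef
  have hTne : T.Nonempty := by
    by_contra hemp
    apply hnb
    rw [s0M, sInf_eq_top]
    rintro x ⟨n, rfl, hn⟩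
    exact absurd ⟨n, hn⟩ hemp
  set s : ℕ := sInf T with hsdef
  have hs_mem : h s < Nat.choose (h 1 + s - 1) s := Nat.sInf_mem hTne
  have hs_min : ∀ n, n < s → Nat.choose (a + n - 1) n ≤ h n := by
    intro n hn
    by_contra hc
    push_neg at hc
    have hmem : n ∈ T := by
      simp only [hTdef, Set.mem_setOf_eq, h1]
      exact hc
    have := Nat.sInf_le hmem
    omega
  have hgrow : ∀ n, 1 ≤ n → h (n+1) ≤ binUp n (h n) := hM.2
  have hbound : ∀ n, 1 ≤ n → h n ≤ Nat.choose (a - 1 + n) n :=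
    growth_bound h a (by omega) (by omega) hgrow
  have hs2 : 2 ≤ s := by
    by_contra hc
    push_neg at hc
    interval_cases s
    · have h0 : h 0 < Nat.choose (h 1 + 0 - 1) 0 := hs_mem
      rw [Nat.choose_zero_right] at h0
      have := hM.1
      omega
    · have h0 : h 1 < Nat.choose (h 1 + 1 - 1) 1 := hs_mem
      rw [Nat.choose_one_right] at h0
      omega
  have hexact : ∀ n, n < s → h n = Nat.choose (a - 1 + n) n := by
    intro n hn
    rcases Nat.eq_zero_or_pos n with rfl | hn1
    · simpa [Nat.choose_zero_right] using hM.1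
    · have h2 := hs_min n hn
      have e : a + n - 1 = a - 1 + n := by omega
      rw [e] at h2
      exact le_antisymm (hbound n hn1) h2
  set r : ℕ := s - 1 with hrdef
  have hr1 : 1 ≤ r := by omega
  have hsr : s = r + 1 := by omega
  set G : ℕ → ℕ → ℕ := Gaux h a with hGdef
  have hGsucc : ∀ i n, G (i+1) n = G i (n+1) - Nat.choose (a - 2 + (n+1)) (n+1) :=
    fun i n => rfl
  have hPQ : ∀ i, (G i 1 ≤ a) ∧ (∀ n, 1 ≤ n → G i (n+1) ≤ binUp n (G i n)) := by
    intro i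
    induction i with
    | zero => exact ⟨by rw [hGdef]; show h 1 ≤ a; omega, hgrow⟩
    | succ i ih =>
        obtain ⟨hq, hp⟩ := ih
        have hbd : ∀ n, 1 ≤ n → G i n ≤ Nat.choose (a - 1 + n) n :=
          growth_bound (G i) a (by omega) hq hp
        constructor
        · rw [hGsucc]
          show G i 2 - Nat.choose (a - 2 + 2) 2 ≤ a
          have h2 : G i 2 ≤ binUp 1 (G i 1) := hp 1 le_rfl
          have h3 : binUp 1 (G i 1) ≤ binUp 1 (Nat.choose a 1) := by
            apply binUp_mono
            rw [Nat.choose_one_right]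
            exact hq
          have h4 : binUp 1 (Nat.choose a 1) = Nat.choose (a+1) 2 :=
            binUp_choose le_rfl (by omega)
          have h5 : Nat.choose (a+1) 2 = Nat.choose a 1 + Nat.choose a 2 :=
            Nat.choose_succ_succ' a 1
          have h6 : Nat.choose a 1 = a := Nat.choose_one_right a
          have e : a - 2 + 2 = a := by omega
          rw [e]
          omega
        · intro n hn
          rw [hGsucc, hGsucc]
          set c : ℕ := a - 1 + n with hcdef
          have e1 : a - 2 + (n+1) = c := by omega
          have e2 : a - 2 + (n+1+1) = c + 1 := by omega
          have e3 : n + 1 + 1 = n + 2 := rfl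
          rw [e1, e2, e3]
          set x : ℕ := G i (n+1) with hxdef
          have hgs : G i (n+2) ≤ binUp (n+1) x := hp (n+1) (by omega)
          rcases le_or_gt x (Nat.choose c (n+1)) with hle | hgt
          · have hz : x - Nat.choose c (n+1) = 0 := by omega
            rw [hz, binUp_zero]
            have h3 : binUp (n+1) x ≤ binUp (n+1) (Nat.choose c (n+1)) :=
              binUp_mono _ _ _ hle
            have h4 : binUp (n+1) (Nat.choose c (n+1)) = Nat.choose (c+1) (n+2) :=
              binUp_choose (by omega) (by omega)
            omega
          · have hx : x ≤ Nat.choose (a - 1 + (n+1)) (n+1) := hbd (n+1) (by omega)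
            have e4 : a - 1 + (n+1) = c + 1 := by omega
            rw [e4] at hx
            have hps : Nat.choose (c+1) (n+1) = Nat.choose c n + Nat.choose c (n+1) :=
              Nat.choose_succ_succ' c n
            have hy : x - Nat.choose c (n+1) ≤ Nat.choose c n := by omega
            have hprep := binUp_prepend (y := x - Nat.choose c (n+1)) hn
              (by omega : n + 1 ≤ c) hy
            have harg : Nat.choose c (n+1) + (x - Nat.choose c (n+1)) = x := by omega
            rw [harg] at hprep
            omega
  have hG0 : ∀ i, i ≤ r → G i 0 = 1 := by
    intro i hi
    have hc := Gaux_closed h a ha2 i 0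
    rw [← hGdef] at hc
    have e : (0:ℕ) + i = i := by omega
    rw [e] at hc
    have hhi : h i = Nat.choose (a - 1 + i) i := hexact i (by omega)
    have hz : Nat.choose (a - 1 + 0) 0 = 1 := Nat.choose_zero_right _
    have hpos : 0 < Nat.choose (a - 1 + i) i := Nat.choose_pos (by omega)
    rw [hc, hhi, hz]
    omega
  have hG1 : ∀ i, i < r → G i 1 = a := by
    intro i hi
    have hc := Gaux_closed h a ha2 i 1
    rw [← hGdef] at hc
    have hhi : h (1 + i) = Nat.choose (a - 1 + (1 + i)) (1 + i) := hexact (1+i) (by omega)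
    have h5 : Nat.choose (a - 1 + 1) 1 = a := by
      rw [Nat.choose_one_right]; omega
    have hmon : Nat.choose (a - 1 + 1) 1 ≤ Nat.choose (a - 1 + 1 + i) (1 + i) :=
      choose_diag_mono (a-1) 1 i
    have e : a - 1 + (1 + i) = a - 1 + 1 + i := by omega
    rw [hc, hhi, h5, e]
    omega
  have hGr1 : G r 1 ≤ a - 1 := by
    have hc := Gaux_closed h a ha2 r 1
    rw [← hGdef] at hc
    have e0 : (1:ℕ) + r = s := by omega
    rw [e0] at hc
    have e1 : h 1 + s - 1 = a - 1 + s := by omega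
    rw [e1] at hs_mem
    have h5 : Nat.choose (a - 1 + 1) 1 = a := by rw [Nat.choose_one_right]; omega
    have hmon : Nat.choose (a - 1 + 1) 1 ≤ Nat.choose (a - 1 + 1 + r) (1 + r) :=
      choose_diag_mono (a-1) 1 r
    have e2 : a - 1 + 1 + r = a - 1 + s := by omega
    have e3 : (1:ℕ) + r = s := by omega
    rw [e2, e3] at hmon
    rw [hc, h5]
    omega
  have hdrop : ∀ i n₀, 1 ≤ n₀ → G i n₀ ≤ Nat.choose (a - 2 + n₀) n₀ →
      ∀ m, n₀ ≤ m → G i m ≤ Nat.choose (a - 2 + m) m := by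
    intro i n₀ hn₀ hbase m hm
    induction m, hm using Nat.le_induction with
    | base => exact hbase
    | succ m hm ih =>
        have h2 : G i (m+1) ≤ binUp m (G i m) := (hPQ i).2 m (by omega)
        have h3 : binUp m (G i m) ≤ binUp m (Nat.choose (a - 2 + m) m) :=
          binUp_mono _ _ _ ih
        have h4 : binUp m (Nat.choose (a - 2 + m) m) = Nat.choose (a - 2 + m + 1) (m+1) :=
          binUp_choose (by omega) (by omega)
        have e : a - 2 + (m+1) = a - 2 + m + 1 := by omega
        rw [e]
        omega
  have hGrle : ∀ m, 1 ≤ m → G r m ≤ Nat.choose (a - 2 + m) m := by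
    have hb : G r 1 ≤ Nat.choose (a - 2 + 1) 1 := by
      rw [Nat.choose_one_right]
      omega
    exact hdrop r 1 le_rfl hb
  have hGz : ∀ n, G (r+1) n = 0 := by
    intro n
    rw [hGsucc]
    have := hGrle (n+1) (by omega)
    omega
  set HH : ℕ → ℕ → ℕ := fun i n => min (G i n) (Nat.choose (a - 2 + n) n) with hHdef
  have hHval : ∀ i n, HH i n = min (G i n) (Nat.choose (a - 2 + n) n) := fun _ _ => rfl
  have hHtype : ∀ i, i < r → HH i 1 = a - 1 := by
    intro i hi
    rw [hHval, hG1 i hi]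
    have e : a - 2 + 1 = a - 1 := by omega
    rw [e, Nat.choose_one_right]
    omega
  refine ⟨r, hr1, HH, ?_, hHtype, ?_, ?_, ?_, ?_⟩
  · -- Macaulay
    intro i hi
    constructor
    · rw [hHval, hG0 i hi]
      simp
    · intro n hn
      rcases le_or_gt (G i n) (Nat.choose (a - 2 + n) n) with hle | hgt
      · calc HH i (n+1) ≤ G i (n+1) := min_le_left _ _
          _ ≤ binUp n (G i n) := (hPQ i).2 n hn
          _ = binUp n (HH i n) := by rw [hHval, min_eq_left hle]
      · calc HH i (n+1) ≤ Nat.choose (a - 2 + (n+1)) (n+1) := min_le_right _ _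
          _ = binUp n (Nat.choose (a - 2 + n) n) := by
              rw [binUp_choose hn (by omega)]
              rfl
          _ = binUp n (HH i n) := by rw [hHval, min_eq_right (le_of_lt hgt)]
  · -- type of the last piece
    rw [hHval]
    have e : a - 2 + 1 = a - 1 := by omega
    calc min (G r 1) (Nat.choose (a - 2 + 1) 1) ≤ Nat.choose (a - 2 + 1) 1 := min_le_right _ _
      _ = a - 1 := by rw [e, Nat.choose_one_right]
  · -- gap condition
    intro i hi1 hir
    have hi1r : i - 1 < r := by omega
    have hpe : ∀ n, (HH (i-1) n < Nat.choose (HH (i-1) 1 + n - 1) n) ↔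
        G (i-1) n < Nat.choose (a - 2 + n) n := by
      intro n
      rw [hHtype (i-1) hi1r]
      have e : a - 1 + n - 1 = a - 2 + n := by omega
      rw [e, hHval]
      omega
    by_cases hcase : ∀ n, ¬ (G (i-1) n < Nat.choose (a - 2 + n) n)
    · left
      rw [s0M, sInf_eq_top]
      rintro x ⟨n, rfl, hn⟩
      exact absurd ((hpe n).mp hn) (hcase n)
    · right
      push_neg at hcase
      set U : Set ℕ := {n | G (i-1) n < Nat.choose (a - 2 + n) n} with hUdef
      have hUne : U.Nonempty := hcase
      set n₀ : ℕ := sInf U with hn₀def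
      have hn₀mem : G (i-1) n₀ < Nat.choose (a - 2 + n₀) n₀ := Nat.sInf_mem hUne
      have hn₀2 : 2 ≤ n₀ := by
        by_contra hcc
        push_neg at hcc
        interval_cases n₀
        · have h00 : G (i-1) 0 = 1 := hG0 (i-1) (by omega)
          have h01 : Nat.choose (a - 2 + 0) 0 = 1 := Nat.choose_zero_right _
          omega
        · have h10 : G (i-1) 1 = a := hG1 (i-1) hi1r
          have h11 : Nat.choose (a - 2 + 1) 1 = a - 1 := by
            rw [Nat.choose_one_right]; omega
          omega
      have hvan : ∀ m, n₀ - 1 ≤ m → G i m = 0 := by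
        intro m hm
        have h2 : G (i-1) (m+1) ≤ Nat.choose (a - 2 + (m+1)) (m+1) :=
          hdrop (i-1) n₀ (by omega) (le_of_lt hn₀mem) (m+1) (by omega)
        have e : i = (i-1) + 1 := by omega
        rw [e, hGsucc]
        omega
      have hvanH : ∀ m, n₀ - 1 ≤ m → HH i m = 0 := by
        intro m hm
        rw [hHval, hvan m hm]
        simp
      have hs0 : s0M (HH (i-1)) = (n₀ : ℕ∞) := by
        rw [s0M]
        rw [sInf_enat_coe (fun n => HH (i-1) n < Nat.choose (HH (i-1) 1 + n - 1) n)
          ⟨n₀, (hpe n₀).mpr hn₀mem⟩]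
        congr 1
        rw [hn₀def, hUdef]
        congr 1
        ext n
        exact hpe n
      refine ⟨?_, ?_⟩
      · apply Set.Finite.subset (Set.finite_lt_nat (n₀ - 1))
        intro u hu
        simp only [Function.mem_support] at hu
        simp only [Set.mem_setOf_eq]
        by_contra hcc
        push_neg at hcc
        exact hu (hvanH u hcc)
      · rw [hs0]
        have hsup : supN (HH i) ≤ n₀ - 2 := by
          apply csSup_le
          · refine ⟨0, ?_⟩
            simp only [Set.mem_setOf_eq]
            rw [hHval, hG0 i (by omega)]
            simp
          · intro u hu
            simp only [Set.mem_setOf_eq] at hu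
            by_contra hcc
            push_neg at hcc
            exact hu (hvanH u (by omega))
        have hfin : supN (HH i) + 1 < n₀ := by omega
        exact_mod_cast hfin
  · -- the sum identity
    have hsplit : ∀ i n, i ≤ r → G i n =
        HH i n + (if 1 ≤ n then G (i+1) (n-1) else 0) := by
      intro i n hi
      rcases Nat.eq_zero_or_pos n with rfl | hn
      · simp [hHval, hG0 i hi]
      · obtain ⟨m, rfl⟩ : ∃ m, n = m + 1 := ⟨n-1, by omega⟩
        have hGe : G (i+1) (m+1-1) = G i (m+1) - Nat.choose (a - 2 + (m+1)) (m+1) := by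
          have e : m + 1 - 1 = m := by omega
          rw [e, hGsucc]
        rw [if_pos (by omega : 1 ≤ m+1), hGe, hHval]
        omega
    have hsum : ∀ j, j ≤ r + 1 → ∀ n, G (r+1-j) n =
        ∑ k ∈ Finset.range j, (if k ≤ n then HH (r+1-j+k) (n-k) else 0) := by
      intro j
      induction j with
      | zero =>
          intro _ n
          simpa using hGz n
      | succ j ih =>
          intro hj n
          have e : r + 1 - (j+1) + 1 = r + 1 - j := by omega
          have htail : (if 1 ≤ n then G (r+1-(j+1)+1) (n-1) else 0) =
              ∑ k ∈ Finset.range j, (if k + 1 ≤ n then HH (r+1-(j+1)+(k+1)) (n-(k+1)) else 0) := by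
            rcases Nat.eq_zero_or_pos n with rfl | hn
            · rw [if_neg (by omega : ¬ (1:ℕ) ≤ 0)]
              symm
              apply Finset.sum_eq_zero
              intro k _
              rw [if_neg (by omega : ¬ k + 1 ≤ 0)]
            · rw [if_pos (by omega : 1 ≤ n), e, ih (by omega) (n-1)]
              apply Finset.sum_congr rfl
              intro k _
              have e2 : r + 1 - (j+1) + (k+1) = r + 1 - j + k := by omega
              rcases le_or_gt (k+1) n with hk | hk
              · rw [if_pos hk, if_pos (by omega : k ≤ n - 1), e2]
                congr 1
                omega
              · rw [if_neg (by omega), if_neg (by omega)]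
          rw [Finset.sum_range_succ', ← htail]
          simp only [Nat.sub_zero, Nat.add_zero, if_pos (Nat.zero_le n)]
          rw [hsplit (r+1-(j+1)) n (by omega)]
          omega
    intro n
    have hfin := hsum (r+1) le_rfl n
    have e : r + 1 - (r+1) = 0 := by omega
    rw [e] at hfin
    have e2 : G 0 n = h n := rfl
    rw [e2] at hfin
    rw [hfin]
    apply Finset.sum_congr rfl
    intro k _
    rw [Nat.zero_add]
  · -- s₀(h) = r + 1
    rw [s0M]
    rw [sInf_enat_coe (fun n => h n < Nat.choose (h 1 + n - 1) n) hTne]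
    have e : sInf {n | h n < Nat.choose (h 1 + n - 1) n} = s := rfl
    rw [e, hsr]
    push_cast
    ring
end
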